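/- Let p ≥ 1 and let f_1, …, f_w be monotone norms on ℝⁿ, each differentiable at every point of the nonnegative orthant except the origin and each p-supermodular. Let p′ be any real with p′ ≥ max(p, log₂ w). Then M(x) := (∑_{i=1}^w f_i(x)^{p′})^{1/p′} is a monotone norm on ℝⁿ that is p′-supermodular and satisfies max_i f_i(x) ≤ M(x) ≤ 2·max_i f_i(x) for all x ∈ ℝⁿ with nonnegative coordinates. -/

import Mathlib

noncomputable section

/-- A monotone norm on ℝⁿ: subadditive, absolutely homogeneous, point-separating, and
monotone on the nonnegative orthant. -/
def IsMonotoneNorm {n : ℕ} (N : (Fin n → ℝ) → ℝ) : Prop :=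
  (∀ x y, N (x + y) ≤ N x + N y) ∧
  (∀ (c : ℝ) (x), N (c • x) = |c| * N x) ∧
  (∀ x, N x = 0 → x = 0) ∧
  (∀ x y : Fin n → ℝ, 0 ≤ x → x ≤ y → N x ≤ N y)

/-- `N` is `p`-supermodular: `N(u+v+w)^p − N(u+v)^p ≥ N(u+w)^p − N(u)^p` for all
nonnegative `u, v, w`. -/
def IsPSupermodular {n : ℕ} (N : (Fin n → ℝ) → ℝ) (p : ℝ) : Prop :=
  ∀ u v w : Fin n → ℝ, 0 ≤ u → 0 ≤ v → 0 ≤ w →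
    N (u + w) ^ p - N u ^ p ≤ N (u + v + w) ^ p - N (u + v) ^ p

/-- Convexity step: for `0 ≤ a ≤ b`, `a ≤ c`, `q ≥ 1`:
`b^q + c^q ≤ a^q + (b+c-a)^q`. -/
lemma key_conv (q : ℝ) (hq : 1 ≤ q) {a b c : ℝ} (ha : 0 ≤ a) (hab : a ≤ b) (hac : a ≤ c) :
    b ^ q + c ^ q ≤ a ^ q + (b + c - a) ^ q := by
  have hs : 0 ≤ b + c - 2 * a := by linarith
  rcases eq_or_lt_of_le hs with hs0 | hs0
  · have hb : b = a := by nlinarith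
    have hc : c = a := by nlinarith
    rw [hb, hc]
    have h : a + a - a = a := by ring
    rw [h]
  · have hsne : b + c - 2 * a ≠ 0 := ne_of_gt hs0
    have hconv := convexOn_rpow hq
    have hmem1 : a ∈ Set.Ici (0:ℝ) := ha
    have hmem2 : b + c - a ∈ Set.Ici (0:ℝ) := by simp only [Set.mem_Ici]; linarith
    have hl : (0:ℝ) ≤ (b - a) / (b + c - 2 * a) := div_nonneg (by linarith) (by linarith)
    have hm : (0:ℝ) ≤ (c - a) / (b + c - 2 * a) := div_nonneg (by linarith) (by linarith)
    have hsum : (c - a) / (b + c - 2 * a) + (b - a) / (b + c - 2 * a) = 1 := by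
      rw [← add_div, div_eq_one_iff_eq hsne]
      ring
    have hsum' : (b - a) / (b + c - 2 * a) + (c - a) / (b + c - 2 * a) = 1 := by linarith
    have h1 := hconv.2 hmem1 hmem2 hm hl hsum
    have h2 := hconv.2 hmem1 hmem2 hl hm hsum'
    simp only [smul_eq_mul] at h1 h2
    have e1 : (c - a) / (b + c - 2 * a) * a + (b - a) / (b + c - 2 * a) * (b + c - a) = b := by
      rw [div_mul_eq_mul_div, div_mul_eq_mul_div, ← add_div, div_eq_iff hsne]
      ring
    have e2 : (b - a) / (b + c - 2 * a) * a + (c - a) / (b + c - 2 * a) * (b + c - a) = c := by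
      rw [div_mul_eq_mul_div, div_mul_eq_mul_div, ← add_div, div_eq_iff hsne]
      ring
    rw [e1] at h1
    rw [e2] at h2
    have e3 : ((c - a) / (b + c - 2 * a) * a ^ q + (b - a) / (b + c - 2 * a) * (b + c - a) ^ q)
        + ((b - a) / (b + c - 2 * a) * a ^ q + (c - a) / (b + c - 2 * a) * (b + c - a) ^ q)
        = a ^ q + (b + c - a) ^ q := by
      linear_combination a ^ q * hsum + (b + c - a) ^ q * hsum'
    linarith [add_le_add h1 h2, e3]

/-- Four-point lemma: supermodular increments are preserved by `x ↦ x^q`, `q ≥ 1`. -/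
lemma four_pt (q : ℝ) (hq : 1 ≤ q) {a b c d : ℝ} (ha : 0 ≤ a) (hab : a ≤ b) (hac : a ≤ c)
    (h : c - a ≤ d - b) : c ^ q + b ^ q ≤ d ^ q + a ^ q := by
  have h0 : (0:ℝ) ≤ b + c - a := by linarith
  have hd : b + c - a ≤ d := by linarith
  have h1 := key_conv q hq ha hab hac
  have h2 := Real.rpow_le_rpow h0 hd (le_trans zero_le_one hq)
  linarith

/-- If `f₁, …, f_w` are differentiable `p`-supermodular monotone norms and
`p′ ≥ max(p, log₂ w)`, then the `ℓ_{p′}`-combination `(∑ᵢ fᵢ(x)^{p′})^{1/p′}` is a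
`p′`-supermodular monotone norm that `2`-approximates `maxᵢ fᵢ`. -/
theorem max_of_pSupermodular_approx {n : ℕ} (p : ℝ) (hp : 1 ≤ p)
    (w : ℕ) (hw : 1 ≤ w) (f : Fin w → (Fin n → ℝ) → ℝ)
    (hf : ∀ i, IsMonotoneNorm (f i))
    (hdiff : ∀ i, ∀ x : Fin n → ℝ, 0 ≤ x → x ≠ 0 → DifferentiableAt ℝ (f i) x)
    (hsup : ∀ i, IsPSupermodular (f i) p)
    (p' : ℝ) (hp' : max p (Real.logb 2 w) ≤ p') :
    IsMonotoneNorm (fun x : Fin n → ℝ => (∑ i, f i x ^ p') ^ (1 / p')) ∧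
    IsPSupermodular (fun x : Fin n → ℝ => (∑ i, f i x ^ p') ^ (1 / p')) p' ∧
    ∀ x : Fin n → ℝ, 0 ≤ x →
      (⨆ i, f i x) ≤ (∑ i, f i x ^ p') ^ (1 / p') ∧
      (∑ i, f i x ^ p') ^ (1 / p') ≤ 2 * ⨆ i, f i x := by
  classical
  have hwpos : 0 < w := hw
  haveI : Nonempty (Fin w) := ⟨⟨0, hw⟩⟩
  have hp'1 : 1 ≤ p' := le_trans hp (le_trans (le_max_left _ _) hp')
  have hp'pos : 0 < p' := lt_of_lt_of_le zero_lt_one hp'1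
  have hp'ne : p' ≠ 0 := ne_of_gt hp'pos
  have hppos : 0 < p := lt_of_lt_of_le zero_lt_one hp
  have hinv1 : p' * (1 / p') = 1 := by field_simp
  have hinv2 : 1 / p' * p' = 1 := by field_simp
  have hN0 : ∀ i, f i 0 = 0 := by
    intro i
    have h := (hf i).2.1 0 0
    simpa using h
  have hnn : ∀ i x, 0 ≤ f i x := by
    intro i x
    have h2 : f i (-x) = f i x := by
      have h := (hf i).2.1 (-1) x
      simpa using h
    have h1 := (hf i).1 x (-x)
    rw [add_neg_cancel, hN0 i, h2] at h1
    linarith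
  have hSnn : ∀ x : Fin n → ℝ, 0 ≤ ∑ i, f i x ^ p' :=
    fun x => Finset.sum_nonneg fun i _ => Real.rpow_nonneg (hnn i x) _
  have hMp : ∀ x : Fin n → ℝ, ((∑ i, f i x ^ p') ^ (1 / p')) ^ p' = ∑ i, f i x ^ p' := by
    intro x
    rw [← Real.rpow_mul (hSnn x), hinv2, Real.rpow_one]
  have hmono : ∀ i, ∀ x y : Fin n → ℝ, 0 ≤ x → x ≤ y → f i x ≤ f i y :=
    fun i => (hf i).2.2.2
  refine ⟨⟨?_, ?_, ?_, ?_⟩, ?_, ?_⟩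
  · -- subadditive
    intro x y
    dsimp only
    calc (∑ i, f i (x + y) ^ p') ^ (1 / p')
        ≤ (∑ i, (f i x + f i y) ^ p') ^ (1 / p') := by
          apply Real.rpow_le_rpow (hSnn _) _ (by positivity)
          exact Finset.sum_le_sum fun i _ =>
            Real.rpow_le_rpow (hnn i _) ((hf i).1 x y) hp'pos.le
      _ ≤ (∑ i, f i x ^ p') ^ (1 / p') + (∑ i, f i y ^ p') ^ (1 / p') :=
          Real.Lp_add_le_of_nonneg (s := Finset.univ) hp'1 (fun i _ => hnn i x) (fun i _ => hnn i y)
  · -- homogeneous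
    intro c x
    dsimp only
    have h1 : (∑ i, f i (c • x) ^ p') = |c| ^ p' * ∑ i, f i x ^ p' := by
      rw [Finset.mul_sum]
      refine Finset.sum_congr rfl fun i _ => ?_
      rw [(hf i).2.1 c x, Real.mul_rpow (abs_nonneg c) (hnn i x)]
    rw [h1, Real.mul_rpow (Real.rpow_nonneg (abs_nonneg c) _) (hSnn x),
      ← Real.rpow_mul (abs_nonneg c), hinv1, Real.rpow_one]
  · -- point separating
    intro x hx
    change (∑ i, f i x ^ p') ^ (1 / p') = 0 at hx
    have hS : ∑ i, f i x ^ p' = 0 := by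
      by_contra h
      have hpos : 0 < ∑ i, f i x ^ p' := lt_of_le_of_ne (hSnn x) (Ne.symm h)
      have := Real.rpow_pos_of_pos hpos (1 / p')
      rw [hx] at this
      exact lt_irrefl 0 this
    have hterm := (Finset.sum_eq_zero_iff_of_nonneg
      (fun i _ => Real.rpow_nonneg (hnn i x) p')).mp hS
    have h0 : f ⟨0, hw⟩ x = 0 := by
      have h := hterm ⟨0, hw⟩ (Finset.mem_univ _)
      exact ((Real.rpow_eq_zero_iff_of_nonneg (hnn _ x)).mp h).1
    exact (hf ⟨0, hw⟩).2.2.1 x h0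
  · -- monotone
    intro x y hx hxy
    dsimp only
    apply Real.rpow_le_rpow (hSnn x) _ (by positivity)
    exact Finset.sum_le_sum fun i _ =>
      Real.rpow_le_rpow (hnn i x) (hmono i x y hx hxy) hp'pos.le
  · -- p'-supermodular
    intro u v w' hu hv hw'
    dsimp only
    rw [hMp (u + w'), hMp u, hMp (u + v + w'), hMp (u + v), sub_le_sub_iff]
    rw [← Finset.sum_add_distrib, ← Finset.sum_add_distrib]
    apply Finset.sum_le_sum
    intro i _
    have hq1 : 1 ≤ p' / p := (one_le_div hppos).mpr (le_trans (le_max_left _ _) hp')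
    have hkey : ∀ x : Fin n → ℝ, f i x ^ p' = (f i x ^ p) ^ (p' / p) := by
      intro x
      rw [← Real.rpow_mul (hnn i x)]
      congr 1
      field_simp
    rw [hkey (u + w'), hkey (u + v), hkey (u + v + w'), hkey u]
    have hA : (0:ℝ) ≤ f i u ^ p := Real.rpow_nonneg (hnn i u) p
    have hAB : f i u ^ p ≤ f i (u + v) ^ p :=
      Real.rpow_le_rpow (hnn i u) (hmono i u (u + v) hu (le_add_of_nonneg_right hv)) hppos.le
    have hAC : f i u ^ p ≤ f i (u + w') ^ p :=
      Real.rpow_le_rpow (hnn i u) (hmono i u (u + w') hu (le_add_of_nonneg_right hw')) hppos.le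
    have hsupi := hsup i u v w' hu hv hw'
    exact four_pt (p' / p) hq1 hA hAB hAC (by linarith)
  · -- approximation
    intro x hx
    have hbdd : BddAbove (Set.range fun i => f i x) := Set.Finite.bddAbove (Set.finite_range _)
    have hle : ∀ i, f i x ≤ ⨆ j, f j x := fun i => le_ciSup hbdd i
    have hMnn : 0 ≤ ⨆ j, f j x := le_trans (hnn ⟨0, hw⟩ x) (hle _)
    constructor
    · apply ciSup_le
      intro j
      have hjx : (f j x ^ p') ^ (1 / p') = f j x := by
        rw [← Real.rpow_mul (hnn j x), hinv1, Real.rpow_one]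
      calc f j x = (f j x ^ p') ^ (1 / p') := hjx.symm
        _ ≤ (∑ i, f i x ^ p') ^ (1 / p') := by
            apply Real.rpow_le_rpow (Real.rpow_nonneg (hnn j x) _) _ (by positivity)
            exact Finset.single_le_sum (fun i _ => Real.rpow_nonneg (hnn i x) _)
              (Finset.mem_univ j)
    · have hsum : (∑ i, f i x ^ p') ≤ (w : ℝ) * (⨆ j, f j x) ^ p' := by
        calc ∑ i, f i x ^ p' ≤ ∑ _i : Fin w, (⨆ j, f j x) ^ p' :=
              Finset.sum_le_sum fun i _ => Real.rpow_le_rpow (hnn i x) (hle i) hp'pos.le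
          _ = (w : ℝ) * (⨆ j, f j x) ^ p' := by
              simp [Finset.sum_const, Finset.card_univ, nsmul_eq_mul]
      have hw2 : (w : ℝ) ≤ 2 ^ p' := by
        have hwpos' : (0:ℝ) < w := by exact_mod_cast hwpos
        calc (w : ℝ) = 2 ^ Real.logb 2 (w : ℝ) :=
              (Real.rpow_logb (by norm_num) (by norm_num) hwpos').symm
          _ ≤ 2 ^ p' := Real.rpow_le_rpow_of_exponent_le (by norm_num)
              (le_trans (le_max_right _ _) hp')
      have hw3 : (w : ℝ) ^ (1 / p') ≤ 2 := by
        calc (w : ℝ) ^ (1 / p') ≤ (2 ^ p') ^ (1 / p') :=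
              Real.rpow_le_rpow (Nat.cast_nonneg w) hw2 (by positivity)
          _ = 2 := by rw [← Real.rpow_mul (by norm_num), hinv1, Real.rpow_one]
      calc (∑ i, f i x ^ p') ^ (1 / p')
          ≤ ((w : ℝ) * (⨆ j, f j x) ^ p') ^ (1 / p') :=
            Real.rpow_le_rpow (hSnn x) hsum (by positivity)
        _ = (w : ℝ) ^ (1 / p') * ((⨆ j, f j x) ^ p') ^ (1 / p') :=
            Real.mul_rpow (Nat.cast_nonneg w) (Real.rpow_nonneg hMnn _)
        _ = (w : ℝ) ^ (1 / p') * (⨆ j, f j x) := by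
            rw [← Real.rpow_mul hMnn, hinv1, Real.rpow_one]
        _ ≤ 2 * ⨆ j, f j x := mul_le_mul_of_nonneg_right hw3 hMnn
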